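/- If w is a subscript-increasing word on Σ₈ and φ(w) is subscript-increasing, then for any factor x y x′ of φ(w) with |x| = |y|/3 = |x′| odd and x containing a letter with an even subscript, the words x y x′ is not a pre-5/4-power, provided the letters of φ(w) with even subscripts form a factor of (0₀ 0₂ 1₄ 1₆)^ω. -/

import Mathlib

abbrev Sigma8 := ℤ × Fin 8

def phiAux (n : ℤ) : ℕ → List Sigma8
  | 0 => [(0,0),(1,1),(0,2),(0,3),(1,4),(n+3,5)]
  | 1 => [(1,6),(1,7),(0,0),(0,1),(0,2),(n+2,3)]
  | 2 => [(1,4),(1,5),(1,6),(0,7),(0,0),(n+3,1)]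
  | 3 => [(0,2),(1,3),(1,4),(0,5),(1,6),(n+2,7)]
  | 4 => [(0,0),(1,1),(0,2),(0,3),(1,4),(n+1,5)]
  | 5 => [(1,6),(1,7),(0,0),(0,1),(0,2),(n+2,3)]
  | 6 => [(1,4),(1,5),(1,6),(0,7),(0,0),(n+1,1)]
  | 7 => [(0,2),(1,3),(1,4),(0,5),(1,6),(n+2,7)]
  | _ => []

/-- The 6-uniform morphism φ on Σ₈, on a single letter. -/
def phi (a : Sigma8) : List Sigma8 := phiAux a.1 a.2.val

/-- φ extended to words by concatenation. -/
def phiW (w : List Sigma8) : List Sigma8 := w.flatMap phi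

/-- A word on Σ₈ is subscript-increasing if subscripts increase by 1 mod 8
from each letter to the next. -/
def SubIncr (w : List Sigma8) : Prop :=
  ∀ i : ℕ, (h : i + 1 < w.length) →
    (w.get ⟨i + 1, h⟩).2 = (w.get ⟨i, Nat.lt_of_succ_lt h⟩).2 + 1

/-- A 5/4-power: a word of the form x y x with x nonempty and |y| = 3|x|
(equivalently |xy| = 4|x|). -/
def IsPow54 {α : Type*} (w : List α) : Prop :=
  ∃ x y : List α, x ≠ [] ∧ y.length = 3 * x.length ∧ w = x ++ y ++ x

lemma phi_length (a : Sigma8) : (phi a).length = 6 := by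
  obtain ⟨n, j⟩ := a; fin_cases j <;> rfl

lemma phiW_length (z : List Sigma8) : (phiW z).length = 6 * z.length := by
  induction z with
  | nil => rfl
  | cons a t ih => simp [phiW, List.flatMap_cons, phi_length] at *; omega

lemma phiW_append (u v : List Sigma8) : phiW (u ++ v) = phiW u ++ phiW v := by
  simp [phiW]

lemma blockwise : ∀ (x x' : List Sigma8), phiW x = phiW x' → x.length = x'.length →
    ∀ i (hi : i < x.length) (hi' : i < x'.length), phi (x.get ⟨i, hi⟩) = phi (x'.get ⟨i, hi'⟩) := by
  intro x
  induction x with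
  | nil => intro x' _ _ i hi; exact absurd hi (by simp)
  | cons a t ih =>
    intro x' heq hl i hi hi'
    cases x' with
    | nil => simp at hl
    | cons b t' =>
      simp only [phiW, List.flatMap_cons] at heq
      have h1 := List.append_inj (s₁ := phi a) (s₂ := phi b) heq
        (by rw [phi_length, phi_length])
      cases i with
      | zero => exact h1.1
      | succ j =>
        exact ih t' h1.2 (by simpa using hl) j (by simpa using hi) (by simpa using hi')

lemma get_right (s u : List Sigma8) (j : ℕ) (hj : j < u.length)
    (hj2 : s.length + j < (s ++ u).length) :
    (s ++ u)[s.length + j]'hj2 = u[j]'hj := by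
  rw [List.getElem_append_right (Nat.le_add_right _ _)]
  simp only [Nat.add_sub_cancel_left]

lemma get_infix (s u t : List Sigma8) (j : ℕ) (hj : j < u.length)
    (hj2 : s.length + j < (s ++ u ++ t).length) :
    (s ++ u ++ t)[s.length + j]'hj2 = u[j]'hj := by
  have h1 : s.length + j < (s ++ u).length := by simp only [List.length_append]; omega
  rw [List.getElem_append_left h1, List.getElem_append_right (Nat.le_add_right _ _)]
  simp only [Nat.add_sub_cancel_left]

lemma subincr_infix {u v : List Sigma8} (h : u <:+: v) (hv : SubIncr v) : SubIncr u := by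
  obtain ⟨s, t, rfl⟩ := h
  intro i hi
  have hl : (s ++ u ++ t).length = s.length + u.length + t.length := by
    simp only [List.length_append]
  have key := hv (s.length + i) (by omega)
  simp only [List.get_eq_getElem] at key ⊢
  rw [← get_infix s u t (i+1) hi (by omega), ← get_infix s u t i (by omega) (by omega)]
  exact key

open Fin.NatCast in
lemma subincr_get {v : List Sigma8} (hv : SubIncr v) :
    ∀ i (hi : i < v.length) (h0 : 0 < v.length),
      (v.get ⟨i, hi⟩).2 = (v.get ⟨0, h0⟩).2 + (i : Fin 8) := by
  intro i
  induction i with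
  | zero => intro hi h0; simp
  | succ j ih =>
    intro hi h0
    have := hv j hi
    rw [this, ih (by omega) h0]
    push_cast
    rw [add_assoc]

theorem stmt16 (w : List Sigma8) (hw : SubIncr w) (hphiw : SubIncr (phiW w))
    (hper : ∃ m : ℕ, (phiW w).filter (fun a => a.2.val % 2 == 0) <:+:
        (List.replicate m ([((0:ℤ),(0:Fin 8)), (0,2), (1,4), (1,6)] : List Sigma8)).flatten)
    (x y x' : List Sigma8) (hfac : (x ++ y ++ x') <:+: phiW w)
    (hlen : x'.length = x.length) (hy : y.length = 3 * x.length)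
    (hodd : x.length % 2 = 1)
    (heven : ∃ a ∈ x, a.2.val % 2 = 0) :
    ¬ IsPow54 (phiW (x ++ y ++ x')) := by
  rintro ⟨u, v, hu, hv, heq⟩
  -- Every even-subscript letter of phiW w has integer part 0 or 1.
  have hP : ∀ c ∈ phiW w, c.2.val % 2 = 0 → c.1 = 0 ∨ c.1 = 1 := by
    obtain ⟨m, hm⟩ := hper
    intro c hc hcev
    have hc1 : c ∈ (phiW w).filter (fun a => a.2.val % 2 == 0) :=
      List.mem_filter.mpr ⟨hc, by simp [hcev]⟩
    have hc2 := hm.sublist.subset hc1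
    rw [List.mem_flatten] at hc2
    obtain ⟨l, hl, hcl⟩ := hc2
    rw [List.eq_of_mem_replicate hl] at hcl
    simp only [List.mem_cons, List.not_mem_nil, or_false] at hcl
    rcases hcl with rfl | rfl | rfl | rfl <;> simp
  -- From the 5/4-power, deduce phiW x = phiW x'.
  rw [phiW_append, phiW_append] at heq
  have hulen : u.length = 6 * x.length := by
    have := congrArg List.length heq
    simp only [List.length_append, phiW_length] at this
    omega
  have hx'u : phiW x' = u :=
    (List.append_inj' heq (by rw [phiW_length, hulen, hlen])).2
  rw [List.append_assoc, List.append_assoc] at heq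
  have hxu : phiW x = u :=
    (List.append_inj heq (by rw [phiW_length, hulen])).1
  have hxx' : phiW x = phiW x' := hxu.trans hx'u.symm
  -- the even letter in x and its partner in x'
  obtain ⟨a, hax, haev⟩ := heven
  obtain ⟨⟨k, hk⟩, ha⟩ := List.mem_iff_get.mp hax
  have hk' : k < x'.length := by omega
  set b := x'.get ⟨k, hk'⟩ with hbdef
  have hphieq : phi a = phi b := by
    rw [← ha]; exact blockwise x x' hxx' hlen.symm k hk hk'
  -- subscript relation between a and b
  have hz : SubIncr (x ++ y ++ x') := subincr_infix hfac hphiw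
  have hzlen : (x ++ y ++ x').length = x.length + y.length + x'.length := by
    simp only [List.length_append]
  have h0 : 0 < (x ++ y ++ x').length := by omega
  have hka : (x ++ y ++ x').get ⟨k, by omega⟩ = a := by
    rw [← ha]
    simp only [List.get_eq_getElem]
    have h1 : k < (x ++ y).length := by simp only [List.length_append]; omega
    rw [List.getElem_append_left h1, List.getElem_append_left hk]
  have hkb : (x ++ y ++ x').get ⟨(x ++ y).length + k, by
      simp only [List.length_append] at *; omega⟩ = b := by
    simp only [List.get_eq_getElem, hbdef]
    exact get_right (x ++ y) x' k hk' _
  have hsa := subincr_get hz k (by omega) h0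
  have hsb := subincr_get hz ((x ++ y).length + k) (by simp only [List.length_append]; omega) h0
  rw [hka] at hsa
  rw [hkb] at hsb
  have hb2 : b.2 = a.2 + 4 := by
    rw [hsa, hsb]
    have hxy : (x ++ y).length = 4 * x.length := by simp only [List.length_append]; omega
    open Fin.NatCast in
    have : ((((x ++ y).length + k : ℕ)) : Fin 8) = (k : Fin 8) + 4 := by
      apply Fin.ext
      simp only [Fin.val_natCast, Fin.add_def]
      rw [hxy]
      have : (4 : Fin 8).val = 4 := rfl
      rw [this]
      omega
    rw [this, add_assoc]
  -- memberships
  have hamem : a ∈ phiW w := by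
    apply hfac.sublist.subset
    rw [← ha]
    exact List.mem_append.mpr (Or.inl (List.mem_append.mpr (Or.inl (List.get_mem x ⟨k, hk⟩))))
  have hbmem : b ∈ phiW w := by
    apply hfac.sublist.subset
    exact List.mem_append.mpr (Or.inr (List.get_mem x' ⟨k, hk'⟩))
  have hbval : b.2.val = (a.2.val + 4) % 8 := by
    rw [hb2, Fin.add_def]
    rfl
  have hbev : b.2.val % 2 = 0 := by omega
  have ha1 := hP a hamem haev
  have hb1 := hP b hbmem hbev
  -- final case analysis
  have hlt := a.2.isLt
  have hcases : a.2.val = 0 ∨ a.2.val = 2 ∨ a.2.val = 4 ∨ a.2.val = 6 := by omega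
  simp only [phi] at hphieq
  rcases hcases with h | h | h | h <;>
    rw [h] at hphieq hbval <;>
    rw [hbval] at hphieq <;>
    simp only [phiAux, List.cons.injEq, Prod.mk.injEq, and_true, true_and] at hphieq <;>
    omega
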